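/- Let p : X → Y be a branched covering. Then for every open connected subset U ⊆ Y and every connected component V of p⁻¹(U), one has p(V) = U. In particular, p is an open map. -/

import Mathlib

/-- A subset `U` of a topological space `X` is *portly* if it is open, dense, and
locally connected in `X`. -/
def Portly (X : Type*) [TopologicalSpace X] (U : Set X) : Prop :=
  IsOpen U ∧ Dense U ∧ ∀ W : Set X, IsOpen W → IsConnected W → IsConnected (W ∩ U)

/-- `V` is a connected component of `S`. -/
def IsComponentOf {X : Type*} [TopologicalSpace X] (V S : Set X) : Prop :=
  ∃ x ∈ S, V = connectedComponentIn S x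

/-- A *spread* is a continuous map such that the connected components of preimages of
open subsets of the base form a basis for the topology of the total space. -/
def IsSpread {X Y : Type*} [TopologicalSpace X] [TopologicalSpace Y] (p : X → Y) : Prop :=
  Continuous p ∧ TopologicalSpace.IsTopologicalBasis
    {V : Set X | ∃ U : Set Y, IsOpen U ∧ IsComponentOf V (p ⁻¹' U)}

/-- `p` maps `V` homeomorphically onto `U`. -/
def MapsHomeomorphicallyOnto {X Y : Type*} [TopologicalSpace X] [TopologicalSpace Y]
    (p : X → Y) (V : Set X) (U : Set Y) : Prop :=
  ∃ h : V ≃ₜ U, ∀ v : V, (h v : Y) = p v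

/-- The ordinary locus in the base of a spread: points admitting an open neighborhood
evenly covered by `p`. -/
def OrdBase {X Y : Type*} [TopologicalSpace X] [TopologicalSpace Y] (p : X → Y) : Set Y :=
  {y | ∃ U : Set Y, IsOpen U ∧ y ∈ U ∧
    ∀ V : Set X, IsComponentOf V (p ⁻¹' U) → MapsHomeomorphicallyOnto p V U}

/-- The ordinary locus in the total space of a spread. -/
def OrdTotal {X Y : Type*} [TopologicalSpace X] [TopologicalSpace Y] (p : X → Y) : Set X :=
  p ⁻¹' OrdBase p

/-- A *complete* spread: every monotone choice of connected components of preimages of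
connected open neighborhoods of a point of the closure of the image has nonempty
intersection. -/
def IsCompleteSpread {X Y : Type*} [TopologicalSpace X] [TopologicalSpace Y]
    (p : X → Y) : Prop :=
  IsSpread p ∧ ∀ y ∈ closure (Set.range p),
    ∀ χ : {U : Set Y // IsOpen U ∧ IsConnected U ∧ y ∈ U} → Set X,
      (∀ U, IsComponentOf (χ U) (p ⁻¹' U.1)) →
      (∀ U V, U.1 ⊆ V.1 → χ U ⊆ χ V) →
      (⋂ U, χ U).Nonempty

/-- A *branched covering* is a complete surjective spread between connected spaces whose
ordinary loci are portly. -/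
def IsBranchedCovering {X Y : Type*} [TopologicalSpace X] [TopologicalSpace Y]
    (p : X → Y) : Prop :=
  IsCompleteSpread p ∧ Function.Surjective p ∧ ConnectedSpace X ∧ ConnectedSpace Y ∧
    Portly X (OrdTotal p) ∧ Portly Y (OrdBase p)

open Set Topology

/-- Dichotomy at an ordinary point: there is a small open connected neighborhood `W'`
such that a component of `p ⁻¹' W` whose image meets `W'` has image containing `W'`. -/
lemma dichotomy_aux {X Y : Type*} [TopologicalSpace X] [TopologicalSpace Y]
    [LocallyConnectedSpace X] [LocallyConnectedSpace Y]
    {p : X → Y} {W : Set Y} (hW : IsOpen W) {y' : Y}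
    (hord : y' ∈ OrdBase p) (hy'W : y' ∈ W) :
    ∃ W' : Set Y, IsOpen W' ∧ y' ∈ W' ∧ W' ⊆ W ∧
      ∀ x : X, p x ∈ W' → W' ⊆ p '' connectedComponentIn (p ⁻¹' W) x := by
  obtain ⟨U', hU'o, hy'U', heven⟩ := hord
  set W' := connectedComponentIn (U' ∩ W) y' with hW'def
  have hsub : W' ⊆ U' ∩ W := connectedComponentIn_subset _ _
  have hsubU' : W' ⊆ U' := hsub.trans inter_subset_left
  have hsubW : W' ⊆ W := hsub.trans inter_subset_right
  have hy'W' : y' ∈ W' := mem_connectedComponentIn ⟨hy'U', hy'W⟩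
  refine ⟨W', (hU'o.inter hW).connectedComponentIn, hy'W', hsubW, ?_⟩
  intro x hpx
  have hxU' : x ∈ p ⁻¹' U' := hsubU' hpx
  set D := connectedComponentIn (p ⁻¹' U') x with hDdef
  have hxD : x ∈ D := mem_connectedComponentIn hxU'
  obtain ⟨h, hh⟩ := heven D ⟨x, hxU', rfl⟩
  set f : W' → X := fun w => ((h.symm ⟨w.1, hsubU' w.2⟩ : D) : X) with hfdef
  have hf : Continuous f :=
    continuous_subtype_val.comp (h.symm.continuous.comp
      (Continuous.subtype_mk continuous_subtype_val _))
  have hpf : ∀ w : W', p (f w) = w.1 := by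
    intro w
    have := hh (h.symm ⟨w.1, hsubU' w.2⟩)
    rw [Homeomorph.apply_symm_apply] at this
    exact this.symm
  have hxf : f ⟨p x, hpx⟩ = x := by
    have hx' : h ⟨x, hxD⟩ = ⟨p x, hsubU' hpx⟩ := Subtype.ext (hh ⟨x, hxD⟩)
    have : h.symm ⟨p x, hsubU' hpx⟩ = ⟨x, hxD⟩ := by
      rw [← hx', Homeomorph.symm_apply_apply]
    simp [hfdef, this]
  have hW'conn : IsConnected W' :=
    isConnected_connectedComponentIn_iff.mpr ⟨hy'U', hy'W⟩
  haveI : ConnectedSpace W' := Subtype.connectedSpace hW'conn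
  have hEconn : IsConnected (Set.range f) := isConnected_range hf
  have hEsub : Set.range f ⊆ p ⁻¹' W := by
    rintro _ ⟨w, rfl⟩
    simp only [mem_preimage, hpf w]
    exact hsubW w.2
  have hxE : x ∈ Set.range f := ⟨⟨p x, hpx⟩, hxf⟩
  have hEC : Set.range f ⊆ connectedComponentIn (p ⁻¹' W) x :=
    hEconn.isPreconnected.subset_connectedComponentIn hxE hEsub
  intro w hw
  exact ⟨f ⟨w, hw⟩, hEC ⟨⟨w, hw⟩, rfl⟩, hpf ⟨w, hw⟩⟩

/-- The image of a component of the preimage of a connected open set contains all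
ordinary points of that set. -/
lemma image_comp_superset_ord {X Y : Type*} [TopologicalSpace X] [TopologicalSpace Y]
    [LocallyConnectedSpace X] [LocallyConnectedSpace Y]
    {p : X → Y} (hp : IsBranchedCovering p) {W : Set Y} (hWo : IsOpen W)
    (hWc : IsConnected W) {C : Set X} (hC : IsComponentOf C (p ⁻¹' W)) :
    W ∩ OrdBase p ⊆ p '' C := by
  obtain ⟨hcont, -⟩ := hp.1.1
  have hdenseX : Dense (OrdTotal p) := hp.2.2.2.2.1.2.1
  have hportY := hp.2.2.2.2.2
  obtain ⟨x₀, hx₀, hCeq⟩ := hC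
  set S := W ∩ OrdBase p with hSdef
  have hS : IsConnected S := hportY.2.2 W hWo hWc
  have key : ∀ y' ∈ S, ∃ W', IsOpen W' ∧ y' ∈ W' ∧
      (W' ⊆ p '' C ∨ ∀ a ∈ W', a ∉ p '' C) := by
    intro y' hy'
    obtain ⟨W', hW'o, hy'W', -, hmain⟩ := dichotomy_aux hWo hy'.2 hy'.1
    by_cases hmeet : ∃ a ∈ W', a ∈ p '' C
    · obtain ⟨a, haW', x, hxC, rfl⟩ := hmeet
      refine ⟨W', hW'o, hy'W', Or.inl ?_⟩
      have hxC' : x ∈ connectedComponentIn (p ⁻¹' W) x₀ := hCeq ▸ hxC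
      have : connectedComponentIn (p ⁻¹' W) x = C :=
        (connectedComponentIn_eq hxC').symm.trans hCeq.symm
      exact this ▸ hmain x haW'
    · push_neg at hmeet
      exact ⟨W', hW'o, hy'W', Or.inr hmeet⟩
  choose! F hFo hFy hFd using key
  set G₁ : Set Y := ⋃ (y' : Y) (_ : y' ∈ S) (_ : F y' ⊆ p '' C), F y' with hG₁def
  set G₂ : Set Y := ⋃ (y' : Y) (_ : y' ∈ S) (_ : ¬ F y' ⊆ p '' C), F y' with hG₂def
  have hG₁o : IsOpen G₁ := isOpen_iUnion fun y' => isOpen_iUnion fun hy' =>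
    isOpen_iUnion fun _ => hFo y' hy'
  have hG₂o : IsOpen G₂ := isOpen_iUnion fun y' => isOpen_iUnion fun hy' =>
    isOpen_iUnion fun _ => hFo y' hy'
  have hG₁sub : G₁ ⊆ p '' C := by
    intro a ha
    simp only [hG₁def, mem_iUnion] at ha
    obtain ⟨y', hy', hsub, haF⟩ := ha
    exact hsub haF
  have hG₂disj : ∀ a ∈ G₂, a ∉ p '' C := by
    intro a ha
    simp only [hG₂def, mem_iUnion] at ha
    obtain ⟨y', hy', hnsub, haF⟩ := ha
    rcases hFd y' hy' with h | h
    · exact absurd h hnsub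
    · exact h a haF
  have hcover : S ⊆ G₁ ∪ G₂ := by
    intro y' hy'
    by_cases hc : F y' ⊆ p '' C
    · exact Or.inl (by simp only [hG₁def, mem_iUnion]; exact ⟨y', hy', hc, hFy y' hy'⟩)
    · exact Or.inr (by simp only [hG₂def, mem_iUnion]; exact ⟨y', hy', hc, hFy y' hy'⟩)
  have hCne : C.Nonempty := ⟨x₀, hCeq ▸ mem_connectedComponentIn hx₀⟩
  have hCopen : IsOpen C := hCeq ▸ (hWo.preimage hcont).connectedComponentIn
  obtain ⟨x₁, hx₁C, hx₁O⟩ := hdenseX.inter_open_nonempty C hCopen hCne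
  have hy₁S : p x₁ ∈ S := by
    constructor
    · have : C ⊆ p ⁻¹' W := hCeq ▸ connectedComponentIn_subset _ _
      exact this hx₁C
    · exact hx₁O
  have hy₁G₁ : p x₁ ∈ S ∩ G₁ := by
    refine ⟨hy₁S, ?_⟩
    have hpC : p x₁ ∈ p '' C := ⟨x₁, hx₁C, rfl⟩
    have hsub : F (p x₁) ⊆ p '' C := by
      rcases hFd (p x₁) hy₁S with h | h
      · exact h
      · exact absurd hpC (h _ (hFy _ hy₁S))
    simp only [hG₁def, mem_iUnion]
    exact ⟨p x₁, hy₁S, hsub, hFy _ hy₁S⟩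
  intro y' hy'
  by_contra hy'nC
  have hy'G₂ : y' ∈ S ∩ G₂ := by
    refine ⟨hy', ?_⟩
    rcases hcover hy' with h | h
    · exact absurd (hG₁sub h) hy'nC
    · exact h
  obtain ⟨a, haS, haG₁, haG₂⟩ := hS.isPreconnected G₁ G₂ hG₁o hG₂o hcover
    ⟨p x₁, hy₁G₁⟩ ⟨y', hy'G₂⟩
  exact hG₂disj a haG₂ (hG₁sub haG₁)

/-- The image of a component of the preimage of a connected open set is that set. -/
lemma image_comp_eq {X Y : Type*} [TopologicalSpace X] [TopologicalSpace Y]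
    [T2Space Y] [FirstCountableTopology Y]
    [LocallyConnectedSpace X] [LocallyConnectedSpace Y]
    {p : X → Y} (hp : IsBranchedCovering p) {W : Set Y} (hWo : IsOpen W)
    (hWc : IsConnected W) {C : Set X} (hC : IsComponentOf C (p ⁻¹' W)) :
    p '' C = W := by
  classical
  have hCpre : C ⊆ p ⁻¹' W := by
    obtain ⟨x₀, hx₀, hCeq⟩ := hC
    exact hCeq ▸ connectedComponentIn_subset _ _
  refine subset_antisymm (by rintro _ ⟨x, hx, rfl⟩; exact hCpre hx) ?_
  intro y hy
  have hdenseY : Dense (OrdBase p) := hp.2.2.2.2.2.2.1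
  -- countable antitone neighborhood basis at y
  obtain ⟨B, hB⟩ := (𝓝 y).exists_antitone_basis
  -- shrinking chain of open connected neighborhoods of y inside W
  set Wseq : ℕ → Set Y := fun n =>
    Nat.rec W (fun n Wn => connectedComponentIn (Wn ∩ interior (B n)) y) n with hWseq
  have hW0 : Wseq 0 = W := rfl
  have hWrec : ∀ n, IsOpen (Wseq n) ∧ y ∈ Wseq n ∧ Wseq n ⊆ W := by
    intro n
    induction n with
    | zero => exact ⟨hWo, hy, subset_rfl⟩
    | succ n ih =>
      have hBn : y ∈ interior (B n) :=
        mem_interior_iff_mem_nhds.mpr (hB.mem n)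
      have hmem : y ∈ Wseq n ∩ interior (B n) := ⟨ih.2.1, hBn⟩
      refine ⟨(ih.1.inter isOpen_interior).connectedComponentIn,
        mem_connectedComponentIn hmem, ?_⟩
      exact ((connectedComponentIn_subset _ _).trans inter_subset_left).trans ih.2.2
  have hWconn : ∀ n, IsConnected (Wseq n) := by
    intro n
    cases n with
    | zero => exact hWc
    | succ n =>
      have hBn : y ∈ interior (B n) := mem_interior_iff_mem_nhds.mpr (hB.mem n)
      exact isConnected_connectedComponentIn_iff.mpr ⟨(hWrec n).2.1, hBn⟩
  have hWstep : ∀ n, Wseq (n + 1) ⊆ Wseq n := fun n =>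
    (connectedComponentIn_subset _ _).trans inter_subset_left
  have hWanti : ∀ {m n}, m ≤ n → Wseq n ⊆ Wseq m :=
    fun {m n} h => antitone_nat_of_succ_le hWstep h
  have hbasis : ∀ O : Set Y, IsOpen O → y ∈ O → ∃ n, Wseq n ⊆ O := by
    intro O hOo hyO
    obtain ⟨n, hn⟩ := hB.1.mem_iff.mp (hOo.mem_nhds hyO)
    refine ⟨n + 1, ?_⟩
    calc Wseq (n + 1) ⊆ Wseq n ∩ interior (B n) := connectedComponentIn_subset _ _
      _ ⊆ B n := inter_subset_right.trans interior_subset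
      _ ⊆ O := hn.2
  -- chain of components above the Wseq
  have hstep : ∀ n (Cn : Set X), IsComponentOf Cn (p ⁻¹' Wseq n) →
      ∃ C', IsComponentOf C' (p ⁻¹' Wseq (n + 1)) ∧ C' ⊆ Cn := by
    intro n Cn hCn
    have him := image_comp_superset_ord hp (hWrec n).1 (hWconn n) hCn
    obtain ⟨w, hw1, hw2⟩ := hdenseY.inter_open_nonempty _ (hWrec (n + 1)).1
      ⟨y, (hWrec (n + 1)).2.1⟩
    obtain ⟨x, hxCn, hpx⟩ := him ⟨hWstep n hw1, hw2⟩
    obtain ⟨x', hx', hCneq⟩ := hCn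
    have hxCn' : x ∈ connectedComponentIn (p ⁻¹' Wseq n) x' := hCneq ▸ hxCn
    have hCnx : connectedComponentIn (p ⁻¹' Wseq n) x = Cn :=
      (connectedComponentIn_eq hxCn').symm.trans hCneq.symm
    refine ⟨connectedComponentIn (p ⁻¹' Wseq (n + 1)) x,
      ⟨x, by rw [mem_preimage, hpx]; exact hw1, rfl⟩, ?_⟩
    calc connectedComponentIn (p ⁻¹' Wseq (n + 1)) x
        ⊆ connectedComponentIn (p ⁻¹' Wseq n) x :=
          connectedComponentIn_mono x (preimage_mono (hWstep n))
      _ = Cn := hCnx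
  set Cseq : ∀ n : ℕ, {C' : Set X // IsComponentOf C' (p ⁻¹' Wseq n)} := fun n =>
    Nat.rec ⟨C, hC⟩ (fun n prev =>
      ⟨(hstep n prev.1 prev.2).choose, (hstep n prev.1 prev.2).choose_spec.1⟩) n
    with hCseq
  have hC0 : (Cseq 0).1 = C := rfl
  have hCstep : ∀ n, (Cseq (n + 1)).1 ⊆ (Cseq n).1 := fun n =>
    (hstep n (Cseq n).1 (Cseq n).2).choose_spec.2
  have hCanti : ∀ {m n}, m ≤ n → (Cseq n).1 ⊆ (Cseq m).1 := by
    intro m n h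
    induction h with
    | refl => exact subset_rfl
    | step _ ih => exact (hCstep _).trans ih
  have hCsub : ∀ n, (Cseq n).1 ⊆ p ⁻¹' Wseq n := by
    intro n
    obtain ⟨x', hx', heq⟩ := (Cseq n).2
    exact heq ▸ connectedComponentIn_subset _ _
  have hCconn : ∀ n, IsConnected (Cseq n).1 := by
    intro n
    obtain ⟨x', hx', heq⟩ := (Cseq n).2
    exact heq ▸ isConnected_connectedComponentIn_iff.mpr hx'
  have hz : ∀ n, ∃ z, z ∈ (Cseq n).1 := fun n => (hCconn n).nonempty
  choose z hzmem using hz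
  -- the monotone choice of components
  have hexO : ∀ O : {U : Set Y // IsOpen U ∧ IsConnected U ∧ y ∈ U},
      ∃ n, Wseq n ⊆ O.1 := fun O => hbasis O.1 O.2.1 O.2.2.2
  set nO : {U : Set Y // IsOpen U ∧ IsConnected U ∧ y ∈ U} → ℕ :=
    fun O => Nat.find (hexO O) with hnO
  set χ : {U : Set Y // IsOpen U ∧ IsConnected U ∧ y ∈ U} → Set X :=
    fun O => connectedComponentIn (p ⁻¹' O.1) (z (nO O)) with hχ
  have hzpre : ∀ O, z (nO O) ∈ p ⁻¹' O.1 := fun O =>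
    (preimage_mono (Nat.find_spec (hexO O))) (hCsub _ (hzmem _))
  have hcomp : ∀ O, IsComponentOf (χ O) (p ⁻¹' O.1) := fun O =>
    ⟨z (nO O), hzpre O, rfl⟩
  have key2 : ∀ (O : {U : Set Y // IsOpen U ∧ IsConnected U ∧ y ∈ U}) (m : ℕ),
      nO O ≤ m → connectedComponentIn (p ⁻¹' O.1) (z m) = χ O := by
    intro O m hm
    have hzm : z m ∈ (Cseq (nO O)).1 := hCanti hm (hzmem m)
    have hsub : (Cseq (nO O)).1 ⊆ connectedComponentIn (p ⁻¹' O.1) (z (nO O)) :=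
      (hCconn _).isPreconnected.subset_connectedComponentIn (hzmem _)
        ((hCsub _).trans (preimage_mono (Nat.find_spec (hexO O))))
    exact (connectedComponentIn_eq (hsub hzm)).symm
  have hmono : ∀ O O', O.1 ⊆ O'.1 → χ O ⊆ χ O' := by
    intro O O' hOO'
    have hle : nO O' ≤ nO O :=
      Nat.find_min' _ ((Nat.find_spec (hexO O)).trans hOO')
    calc χ O ⊆ connectedComponentIn (p ⁻¹' O'.1) (z (nO O)) :=
          connectedComponentIn_mono _ (preimage_mono hOO')
      _ = χ O' := key2 O' (nO O) hle
  have hrange : y ∈ closure (Set.range p) := by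
    rw [hp.2.1.range_eq, closure_univ]; trivial
  obtain ⟨x, hx⟩ := hp.1.2 y hrange χ hcomp hmono
  have hxall : ∀ O, x ∈ χ O := fun O => mem_iInter.mp hx O
  -- p x = y
  have hpxy : p x = y := by
    by_contra hne
    have hGo : IsOpen ({p x}ᶜ : Set Y) := isOpen_compl_singleton
    have hyG : y ∈ ({p x}ᶜ : Set Y) := fun h => hne (mem_singleton_iff.mp h).symm
    set O : {U : Set Y // IsOpen U ∧ IsConnected U ∧ y ∈ U} :=
      ⟨connectedComponentIn ({p x}ᶜ) y, hGo.connectedComponentIn,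
        isConnected_connectedComponentIn_iff.mpr hyG, mem_connectedComponentIn hyG⟩
    have : x ∈ p ⁻¹' O.1 := (connectedComponentIn_subset _ _) (hxall O)
    exact (connectedComponentIn_subset _ _) this rfl
  -- x ∈ C
  set O₀ : {U : Set Y // IsOpen U ∧ IsConnected U ∧ y ∈ U} := ⟨W, hWo, hWc, hy⟩
  have hzC : z (nO O₀) ∈ C := hC0 ▸ hCanti (Nat.zero_le _) (hzmem (nO O₀))
  obtain ⟨x₀, hx₀, hCeq⟩ := hC
  have hzC' : z (nO O₀) ∈ connectedComponentIn (p ⁻¹' W) x₀ := hCeq ▸ hzC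
  have hχO₀ : χ O₀ = C := by
    rw [hCeq]
    exact ((connectedComponentIn_eq hzC').symm) ▸ rfl
  have hxC : x ∈ C := hχO₀ ▸ hxall O₀
  exact ⟨x, hxC, hpxy⟩

theorem stmt10 {X Y : Type*} [TopologicalSpace X] [TopologicalSpace Y]
    [T2Space X] [T2Space Y] [FirstCountableTopology X] [FirstCountableTopology Y]
    [LocallyPathConnectedSpace X] [LocallyPathConnectedSpace Y]
    (p : X → Y) (hp : IsBranchedCovering p) :
    (∀ U : Set Y, IsOpen U → IsConnected U →
      ∀ V : Set X, IsComponentOf V (p ⁻¹' U) → p '' V = U) ∧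
    IsOpenMap p := by
  refine ⟨fun U hU hUc V hV => image_comp_eq hp hU hUc hV, ?_⟩
  intro S hS
  rw [isOpen_iff_forall_mem_open]
  rintro _ ⟨x, hxS, rfl⟩
  obtain ⟨V', hV'mem, hxV', hV'S⟩ :=
    hp.1.1.2.exists_subset_of_mem_open hxS hS
  obtain ⟨U', hU'o, hV'comp⟩ := hV'mem
  obtain ⟨x'', hx'', hV'eq⟩ := hV'comp
  have hxV'' : x ∈ connectedComponentIn (p ⁻¹' U') x'' := hV'eq ▸ hxV'
  have hV'x : connectedComponentIn (p ⁻¹' U') x = V' :=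
    (connectedComponentIn_eq hxV'').symm.trans hV'eq.symm
  have hxpre : p x ∈ U' := by
    have : V' ⊆ p ⁻¹' U' := hV'eq ▸ connectedComponentIn_subset _ _
    exact this hxV'
  set W := connectedComponentIn U' (p x) with hWdef
  have hWo : IsOpen W := hU'o.connectedComponentIn
  have hWc : IsConnected W := isConnected_connectedComponentIn_iff.mpr hxpre
  have hpxW : p x ∈ W := mem_connectedComponentIn hxpre
  have hCx : IsComponentOf (connectedComponentIn (p ⁻¹' W) x) (p ⁻¹' W) :=
    ⟨x, hpxW, rfl⟩
  have hWsub : W ⊆ U' := connectedComponentIn_subset _ _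
  have him : p '' connectedComponentIn (p ⁻¹' W) x = W :=
    image_comp_eq hp hWo hWc hCx
  have hCxV' : connectedComponentIn (p ⁻¹' W) x ⊆ V' := by
    rw [← hV'x]
    exact connectedComponentIn_mono x (Set.preimage_mono hWsub)
  refine ⟨W, ?_, hWo, hpxW⟩
  rw [← him]
  exact (Set.image_mono hCxV').trans (Set.image_mono hV'S)
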